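/- Let X be a connected compact Hausdorff abelian topological group. Then every uniformly continuous real-valued function on the group (X^ℕ, 𝔲) of all X-valued sequences with the uniform topology is bounded, and every uniformly continuous real-valued function on the group F₀(X) of X-valued null sequences with the uniform topology is bounded. -/

import Mathlib

open Filter Topology Set

/-- The group of `X`-valued null sequences. -/
def c0 (X : Type*) [AddCommGroup X] [TopologicalSpace X] [IsTopologicalAddGroup X] :
    AddSubgroup (ℕ → X) where
  carrier := {x : ℕ → X | Tendsto x atTop (𝓝 0)}
  zero_mem' := tendsto_const_nhds
  add_mem' := fun ha hb => by simpa using (add_zero (0 : X)) ▸ ha.add hb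
  neg_mem' := fun ha => by simpa using (neg_zero (G := X)) ▸ ha.neg

open Pointwise in
lemma key_decomp {X : Type*} [AddCommGroup X] [TopologicalSpace X] [IsTopologicalAddGroup X]
    [CompactSpace X] [ConnectedSpace X] (V : Set X) (hV : V ∈ 𝓝 0) :
    ∃ N : ℕ, 0 < N ∧ ∃ U : Set X, U ∈ 𝓝 0 ∧ U ⊆ V ∧ (0 : X) ∈ U ∧
      ∀ x : X, ∃ w : ℕ → X, (∀ i, w i ∈ U) ∧ x = ∑ i ∈ Finset.range N, w i := by
  -- symmetric open U ⊆ V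
  set U : Set X := interior V ∩ (-interior V) with hUdef
  have hUopen : IsOpen U := isOpen_interior.inter isOpen_interior.neg
  have h0U : (0 : X) ∈ U := by
    constructor
    · exact mem_interior_iff_mem_nhds.2 hV
    · simpa using mem_interior_iff_mem_nhds.2 hV
  have hUV : U ⊆ V := fun x hx => interior_subset hx.1
  have hUsymm : ∀ x ∈ U, -x ∈ U := by
    rintro x ⟨h1, h2⟩
    exact ⟨by simpa using h2, by simpa using h1⟩
  have hUnhds : U ∈ 𝓝 (0 : X) := hUopen.mem_nhds h0U
  -- the subgroup generated by U is the whole group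
  have hclos : AddSubgroup.closure U = ⊤ := by
    have hopen : IsOpen ((AddSubgroup.closure U : AddSubgroup X) : Set X) :=
      AddSubgroup.isOpen_of_mem_nhds _ (Filter.mem_of_superset hUnhds AddSubgroup.subset_closure)
    have hclosed : IsClosed ((AddSubgroup.closure U : AddSubgroup X) : Set X) :=
      AddSubgroup.isClosed_of_isOpen _ hopen
    have : IsClopen ((AddSubgroup.closure U : AddSubgroup X) : Set X) := ⟨hclosed, hopen⟩
    rcases isClopen_iff.1 this with h | h
    · exfalso
      have h0 : (0 : X) ∈ ((AddSubgroup.closure U : AddSubgroup X) : Set X) :=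
        AddSubgroup.zero_mem _
      rw [h] at h0
      exact h0
    · exact AddSubgroup.coe_eq_univ.1 h
  -- every element is a sum of finitely many elements of U
  have hsum : ∀ x : X, ∃ n : ℕ, ∃ w : ℕ → X, (∀ i, w i ∈ U) ∧
      x = ∑ i ∈ Finset.range n, w i := by
    intro x
    have hx : x ∈ AddSubmonoid.closure (U ∪ -U) := by
      have : x ∈ (AddSubgroup.closure U).toAddSubmonoid := by
        rw [hclos]; trivial
      rwa [AddSubgroup.closure_toAddSubmonoid] at this
    obtain ⟨l, hl, hsum⟩ := AddSubmonoid.exists_list_of_mem_closure hx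
    refine ⟨l.length, fun i => if h : i < l.length then l.get ⟨i, h⟩ else 0, fun i => ?_, ?_⟩
    · by_cases h : i < l.length
      · simp only [h, dif_pos]
        have := hl (l.get ⟨i, h⟩) (l.get_mem _)
        rcases this with h' | h'
        · exact h'
        · simpa using hUsymm _ (Set.mem_neg.1 h')
      · simp [h, h0U]
    · rw [← hsum, Finset.sum_range]
      simp only [Fin.is_lt, dif_pos]
      conv_lhs => rw [← List.ofFn_getElem (xs := l)]
      rw [List.sum_ofFn]
      rfl
  -- iterated sumsets
  classical
  let A : ℕ → Set X := fun n => Nat.rec {0} (fun _ S => S + U) n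
  have hA0 : A 0 = {0} := rfl
  have hAsucc : ∀ n, A (n + 1) = A n + U := fun n => rfl
  have hAopen : ∀ n, IsOpen (A (n + 1)) := fun n => by
    rw [hAsucc]; exact hUopen.add_left
  have hAmono : Monotone A := by
    apply monotone_nat_of_le_succ
    intro n x hx
    rw [hAsucc]
    simpa using Set.add_mem_add hx h0U
  have hAmem : ∀ n (w : ℕ → X), (∀ i, w i ∈ U) → (∑ i ∈ Finset.range n, w i) ∈ A n := by
    intro n w hw
    induction n with
    | zero => simp [hA0]
    | succ n ih =>
      rw [Finset.sum_range_succ, hAsucc]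
      exact Set.add_mem_add ih (hw n)
  have hAdec : ∀ n x, x ∈ A n → ∃ w : ℕ → X, (∀ i, w i ∈ U) ∧
      x = ∑ i ∈ Finset.range n, w i := by
    intro n
    induction n with
    | zero =>
      intro x hx
      rw [hA0] at hx
      exact ⟨fun _ => 0, fun _ => h0U, by simpa using hx⟩
    | succ n ih =>
      intro x hx
      rw [hAsucc] at hx
      obtain ⟨a, ha, u, hu, rfl⟩ := hx
      obtain ⟨w, hw, rfl⟩ := ih a ha
      refine ⟨fun i => if i = n then u else w i, fun i => ?_, ?_⟩
      · by_cases h : i = n <;> simp [h, hu, hw i]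
      · rw [Finset.sum_range_succ]
        simp only [if_pos rfl]
        congr 1
        apply Finset.sum_congr rfl
        intro i hi
        rw [if_neg (Nat.ne_of_lt (Finset.mem_range.1 hi))]
  -- compactness: uniform N
  have hcover : (univ : Set X) ⊆ ⋃ n, A (n + 1) := by
    intro x _
    obtain ⟨n, w, hw, rfl⟩ := hsum x
    exact Set.mem_iUnion.2 ⟨n, hAmono (Nat.le_succ n) (hAmem n w hw)⟩
  obtain ⟨t, ht⟩ := isCompact_univ.elim_finite_subcover (fun n => A (n + 1)) hAopen hcover
  refine ⟨t.sup id + 1, Nat.succ_pos _, U, hUnhds, hUV, h0U, fun x => ?_⟩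
  apply hAdec
  rcases Set.mem_iUnion₂.1 (ht (Set.mem_univ x)) with ⟨n, hn, hxn⟩
  exact hAmono (Nat.succ_le_succ (Finset.le_sup (f := id) hn)) hxn


lemma abs_chain (F : ℕ → ℝ) (h : ∀ k, |F (k + 1) - F k| < 1) (N : ℕ) :
    |F N| ≤ |F 0| + N := by
  induction N with
  | zero => simp
  | succ n ih =>
    have h1 : |F (n + 1)| - |F n| ≤ |F (n + 1) - F n| := abs_sub_abs_le_abs_sub _ _
    have := (h n).le
    push_cast
    linarith


/-- Let `X` be a connected compact Hausdorff abelian topological group. Then every uniformly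
continuous real-valued function on the group `(X^ℕ, 𝔲)` of all `X`-valued sequences with the
uniform topology is bounded, and every uniformly continuous real-valued function on the group
`F₀(X)` of `X`-valued null sequences with the uniform topology is bounded. Here uniform
continuity of `f` means: for every `ε > 0` there is a neighborhood `V` of `0` in `X` such
that `|f x − f y| < ε` whenever all coordinates of `x − y` lie in `V` (the sets
`V^ℕ`, resp. `V^ℕ ∩ c₀(X)`, form the neighborhood base of `0` for the uniform topology). -/
theorem uniformly_continuous_bounded_on_uniform_sequence_groups (X : Type*) [AddCommGroup X]
    [TopologicalSpace X] [IsTopologicalAddGroup X] [CompactSpace X] [ConnectedSpace X]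
    [T2Space X] :
    (∀ f : (ℕ → X) → ℝ,
        (∀ ε > (0 : ℝ), ∃ V ∈ 𝓝 (0 : X), ∀ x y : ℕ → X,
          (∀ n, x n - y n ∈ V) → |f x - f y| < ε) →
        ∃ C : ℝ, ∀ x : ℕ → X, |f x| ≤ C) ∧
      (∀ f : c0 X → ℝ,
        (∀ ε > (0 : ℝ), ∃ V ∈ 𝓝 (0 : X), ∀ x y : c0 X,
          (∀ n, (x : ℕ → X) n - (y : ℕ → X) n ∈ V) → |f x - f y| < ε) →
        ∃ C : ℝ, ∀ x : c0 X, |f x| ≤ C) := by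
  classical
  constructor
  · intro f hf
    obtain ⟨V, hV, hV1⟩ := hf 1 one_pos
    obtain ⟨N, hN, U, hU, hUV, h0U, hdec⟩ := key_decomp V hV
    refine ⟨|f 0| + N, fun x => ?_⟩
    choose w hw1 hw2 using fun n => hdec (x n)
    set y : ℕ → ℕ → X := fun k n => ∑ i ∈ Finset.range k, w n i with hy
    have hy0 : y 0 = 0 := by funext n; simp [hy]
    have hyN : y N = x := by funext n; simp [hy, (hw2 n).symm]
    have hstep : ∀ k, |f (y (k + 1)) - f (y k)| < 1 := by
      intro k
      apply hV1
      intro n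
      have : y (k + 1) n - y k n = w n k := by
        simp [hy, Finset.sum_range_succ]
      rw [this]
      exact hUV (hw1 n k)
    have := abs_chain (fun k => f (y k)) hstep N
    rw [hy0] at this
    rw [← hyN]
    exact this
  · intro f hf
    obtain ⟨V, hV, hV1⟩ := hf 1 one_pos
    obtain ⟨N, hN, U, hU, hUV, h0U, hdec⟩ := key_decomp V hV
    refine ⟨|f 0| + N, fun x => ?_⟩
    choose g hg1 hg2 using hdec
    set w : ℕ → ℕ → X := fun n =>
      if (x : ℕ → X) n ∈ U then (fun i => if i = 0 then (x : ℕ → X) n else 0)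
      else g ((x : ℕ → X) n) with hwdef
    have hw1 : ∀ n i, w n i ∈ U := by
      intro n i
      by_cases h : (x : ℕ → X) n ∈ U
      · by_cases hi : i = 0 <;> simp [hwdef, h, hi, h0U]
      · simp only [hwdef, if_neg h]
        exact hg1 _ i
    have hw2 : ∀ n, (x : ℕ → X) n = ∑ i ∈ Finset.range N, w n i := by
      intro n
      by_cases h : (x : ℕ → X) n ∈ U
      · simp only [hwdef, if_pos h]
        rw [Finset.sum_ite_eq' (Finset.range N) 0 (fun _ => (x : ℕ → X) n)]
        simp [Finset.mem_range.2 hN]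
      · simp only [hwdef, if_neg h]
        exact hg2 _
    set y : ℕ → ℕ → X := fun k n => ∑ i ∈ Finset.range k, w n i with hy
    have hy0 : y 0 = 0 := by funext n; simp [hy]
    have hyN : y N = (x : ℕ → X) := by funext n; simp [hy, (hw2 n).symm]
    have hyU : ∀ k n, (x : ℕ → X) n ∈ U → y (k + 1) n = (x : ℕ → X) n := by
      intro k n h
      have : ∀ i, w n i = if i = 0 then (x : ℕ → X) n else 0 := by
        intro i; simp [hwdef, h]
      simp only [hy, this]
      rw [Finset.sum_ite_eq' (Finset.range (k + 1)) 0 (fun _ => (x : ℕ → X) n)]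
      simp
    have hymem : ∀ k, y k ∈ c0 X := by
      intro k
      rcases k with _ | k
      · rw [hy0]; exact (c0 X).zero_mem
      · have hev : ∀ᶠ n in atTop, (x : ℕ → X) n ∈ U := x.2 hU
        have : (x : ℕ → X) =ᶠ[atTop] y (k + 1) :=
          hev.mono fun n hn => (hyU k n hn).symm
        exact (x.2.congr' this : Tendsto (y (k + 1)) atTop (𝓝 0))
    set Y : ℕ → c0 X := fun k => ⟨y k, hymem k⟩ with hY
    have hstep : ∀ k, |f (Y (k + 1)) - f (Y k)| < 1 := by
      intro k
      apply hV1
      intro n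
      have : y (k + 1) n - y k n = w n k := by
        simp [hy, Finset.sum_range_succ]
      show y (k + 1) n - y k n ∈ V
      rw [this]
      exact hUV (hw1 n k)
    have := abs_chain (fun k => f (Y k)) hstep N
    have hY0 : Y 0 = 0 := by
      apply Subtype.ext; simpa [hY] using hy0
    have hYN : Y N = x := by
      apply Subtype.ext; simpa [hY] using hyN
    rw [hY0] at this
    rw [← hYN]
    exact this
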